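/- Let q be a probability density on ℝᵏ, σ > 0, and γ ∈ (0,1), and set r = C_q(γ). Then for every x ∈ ℝᵏ with x ≠ 0, the σ-smoothed density satisfies the lower bound q(x;σ) ≥ γ · G_σ(x + r·x/‖x‖₂). -/

import Mathlib

open MeasureTheory Real

/-- The centered Gaussian density `G_σ` on `ℝᵏ`:
`G_σ(x) = (2πσ²)^{-k/2} exp(-‖x‖₂²/(2σ²))`. -/
noncomputable def gaussDensity (k : ℕ) (σ : ℝ) (x : EuclideanSpace ℝ (Fin k)) : ℝ :=
  (2 * Real.pi * σ ^ 2) ^ (-(k : ℝ) / 2) * Real.exp (-‖x‖ ^ 2 / (2 * σ ^ 2))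

/-- `C_q(γ) = inf { s ≥ 0 : ∫_{B(s)} q(u) du ≥ γ }`, where `B(s)` is the closed ball of
radius `s` centered at the origin. -/
noncomputable def Cq (k : ℕ) (q : EuclideanSpace ℝ (Fin k) → ℝ) (γ : ℝ) : ℝ :=
  sInf {s : ℝ | 0 ≤ s ∧ γ ≤ ∫ u in Metric.closedBall (0 : EuclideanSpace ℝ (Fin k)) s, q u}

/-- for a probability density `q` on `ℝᵏ`, `σ > 0`, `γ ∈ (0,1)` and
`r = C_q(γ)`, the σ-smoothed density satisfies, for every `x ≠ 0`,
`q(x;σ) ≥ γ · G_σ(x + r·x/‖x‖₂)`. -/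
theorem smoothed_density_lower_bound (k : ℕ) (σ : ℝ) (hσ : 0 < σ)
    (γ : ℝ) (hγ : γ ∈ Set.Ioo (0 : ℝ) 1)
    (q : EuclideanSpace ℝ (Fin k) → ℝ)
    (hq_nonneg : ∀ u, 0 ≤ q u) (hq_meas : Measurable q)
    (hq_int : ∫ u, q u = 1) :
    ∀ x : EuclideanSpace ℝ (Fin k), x ≠ 0 →
      γ * gaussDensity k σ (x + (Cq k q γ / ‖x‖) • x) ≤
        ∫ u, q u * gaussDensity k σ (x - u) := by
  intro x hx
  have hxn : 0 < ‖x‖ := norm_pos_iff.mpr hx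

  have hqInt : Integrable q := by
    by_contra h
    rw [integral_undef h] at hq_int
    norm_num at hq_int
  set S : Set ℝ :=
    {s : ℝ | 0 ≤ s ∧ γ ≤ ∫ u in Metric.closedBall (0 : EuclideanSpace ℝ (Fin k)) s, q u} with hSdef
  have hFmono : ∀ a b : ℝ, a ≤ b →
      (∫ u in Metric.closedBall (0 : EuclideanSpace ℝ (Fin k)) a, q u) ≤ ∫ u in Metric.closedBall (0 : EuclideanSpace ℝ (Fin k)) b, q u := by
    intro a b hab
    refine setIntegral_mono_set hqInt.integrableOn
      (Filter.Eventually.of_forall hq_nonneg)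
      (Filter.Eventually.of_forall ?_)
    exact fun u hu => Metric.closedBall_subset_closedBall hab hu
  -- S is nonempty
  have hU : (⋃ n : ℕ, Metric.closedBall (0 : EuclideanSpace ℝ (Fin k)) n) = Set.univ := by
    ext u
    simp only [Set.mem_iUnion, Metric.mem_closedBall, dist_zero_right, Set.mem_univ, iff_true]
    exact ⟨⌈‖u‖⌉₊, Nat.le_ceil _⟩
  have htend : Filter.Tendsto (fun n : ℕ => ∫ u in Metric.closedBall (0 : EuclideanSpace ℝ (Fin k)) n, q u)
      Filter.atTop (nhds 1) := by
    have := tendsto_setIntegral_of_monotone (f := q) (μ := volume)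
      (s := fun n : ℕ => Metric.closedBall (0 : EuclideanSpace ℝ (Fin k)) n)
      (fun n => measurableSet_closedBall)
      (fun a b hab => Metric.closedBall_subset_closedBall (by exact_mod_cast hab))
      (by rw [hU]; exact hqInt.integrableOn)
    rw [hU] at this
    simpa [hq_int] using this
  have hSne : S.Nonempty := by
    obtain ⟨n, hn⟩ := (htend.eventually (eventually_gt_nhds hγ.2)).exists
    exact ⟨n, Nat.cast_nonneg n, hn.le⟩
  have hSbdd : BddBelow S := ⟨0, fun s hs => hs.1⟩
  set r := Cq k q γ with hrdef
  have hr0 : 0 ≤ r := le_csInf hSne fun s hs => hs.1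
  -- γ ≤ ∫_{B(r)} q
  have hkey : ∀ n : ℕ, γ ≤ ∫ u in Metric.closedBall (0 : EuclideanSpace ℝ (Fin k)) (r + 1 / (n + 1)), q u := by
    intro n
    obtain ⟨s, hsS, hslt⟩ := Real.lt_sInf_add_pos hSne
      (show (0:ℝ) < 1 / ((n:ℝ) + 1) by positivity)
    exact le_trans hsS.2 (hFmono s _ hslt.le)
  have hInter : (⋂ n : ℕ, Metric.closedBall (0 : EuclideanSpace ℝ (Fin k)) (r + 1 / (n + 1)))
      = Metric.closedBall (0 : EuclideanSpace ℝ (Fin k)) r := by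
    ext u
    simp only [Set.mem_iInter, Metric.mem_closedBall, dist_zero_right]
    constructor
    · intro h
      refine le_of_forall_pos_le_add fun ε hε => ?_
      obtain ⟨n, hn⟩ := exists_nat_one_div_lt hε
      exact (h n).trans (by linarith)
    · intro h n
      have : (0:ℝ) < 1 / ((n:ℝ) + 1) := by positivity
      linarith
  have htend2 : Filter.Tendsto
      (fun n : ℕ => ∫ u in Metric.closedBall (0 : EuclideanSpace ℝ (Fin k)) (r + 1 / (n + 1)), q u)
      Filter.atTop (nhds (∫ u in Metric.closedBall (0 : EuclideanSpace ℝ (Fin k)) r, q u)) := by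
    have := tendsto_setIntegral_of_antitone (f := q) (μ := volume)
      (s := fun n : ℕ => Metric.closedBall (0 : EuclideanSpace ℝ (Fin k)) (r + 1 / (n + 1)))
      (fun n => measurableSet_closedBall)
      (fun a b hab => Metric.closedBall_subset_closedBall (by
        have : (1:ℝ) / ((b:ℝ) + 1) ≤ 1 / ((a:ℝ) + 1) := by
          apply one_div_le_one_div_of_le (by positivity)
          exact_mod_cast by linarith [(Nat.cast_le (α := ℝ)).mpr hab]
        linarith))
      ⟨0, hqInt.integrableOn⟩
    rwa [hInter] at this
  have hrS : γ ≤ ∫ u in Metric.closedBall (0 : EuclideanSpace ℝ (Fin k)) r, q u :=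
    le_of_tendsto_of_tendsto' tendsto_const_nhds htend2 hkey
  -- the Gaussian constant
  set c := gaussDensity k σ (x + (r / ‖x‖) • x) with hcdef
  have hA : (0:ℝ) < (2 * Real.pi * σ ^ 2) ^ (-(k : ℝ) / 2) := by
    apply Real.rpow_pos_of_pos
    positivity
  have hc0 : 0 ≤ c := by
    rw [hcdef]
    unfold gaussDensity
    positivity
  have hnorm : ‖x + (r / ‖x‖) • x‖ = ‖x‖ + r := by
    have h1 : x + (r / ‖x‖) • x = (1 + r / ‖x‖) • x := by
      rw [add_smul, one_smul]
    rw [h1, norm_smul, Real.norm_of_nonneg (by positivity)]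
    field_simp
  -- pointwise bound on the ball
  have hpoint : ∀ u ∈ Metric.closedBall (0 : EuclideanSpace ℝ (Fin k)) r, c ≤ gaussDensity k σ (x - u) := by
    intro u hu
    rw [Metric.mem_closedBall, dist_zero_right] at hu
    have hle : ‖x - u‖ ≤ ‖x‖ + r := (norm_sub_le x u).trans (by linarith)
    rw [hcdef]
    unfold gaussDensity
    apply mul_le_mul_of_nonneg_left _ hA.le
    apply Real.exp_le_exp.mpr
    rw [div_le_div_iff_of_pos_right (by positivity), neg_le_neg_iff, hnorm]
    have h0 : (0:ℝ) ≤ ‖x - u‖ := norm_nonneg _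
    nlinarith
  -- integrability of the smoothed integrand
  have hGcont : Continuous fun u : EuclideanSpace ℝ (Fin k) => gaussDensity k σ (x - u) := by
    unfold gaussDensity
    fun_prop
  have hfInt : Integrable (fun u : EuclideanSpace ℝ (Fin k) => q u * gaussDensity k σ (x - u)) := by
    apply Integrable.mono' (g := fun u => (2 * Real.pi * σ ^ 2) ^ (-(k : ℝ) / 2) * q u)
      (hqInt.const_mul _)
      ((hq_meas.mul hGcont.measurable).aestronglyMeasurable)
    refine Filter.Eventually.of_forall fun u => ?_
    have hg0 : 0 ≤ gaussDensity k σ (x - u) := by unfold gaussDensity; positivity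
    show ‖q u * gaussDensity k σ (x - u)‖ ≤ _
    rw [Real.norm_of_nonneg (mul_nonneg (hq_nonneg u) hg0)]
    have hexp : Real.exp (-‖x - u‖ ^ 2 / (2 * σ ^ 2)) ≤ 1 := by
      apply Real.exp_le_one_iff.mpr
      apply div_nonpos_of_nonpos_of_nonneg
      · simp [sq_nonneg]
      · positivity
    calc q u * gaussDensity k σ (x - u)
        ≤ q u * ((2 * Real.pi * σ ^ 2) ^ (-(k : ℝ) / 2) * 1) := by
          unfold gaussDensity
          exact mul_le_mul_of_nonneg_left (mul_le_mul_of_nonneg_left hexp hA.le) (hq_nonneg u)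
      _ = (2 * Real.pi * σ ^ 2) ^ (-(k : ℝ) / 2) * q u := by ring
  -- main chain
  calc γ * c ≤ (∫ u in Metric.closedBall (0 : EuclideanSpace ℝ (Fin k)) r, q u) * c :=
        mul_le_mul_of_nonneg_right hrS hc0
    _ = ∫ u in Metric.closedBall (0 : EuclideanSpace ℝ (Fin k)) r, q u * c := (integral_mul_const c q).symm
    _ ≤ ∫ u in Metric.closedBall (0 : EuclideanSpace ℝ (Fin k)) r, q u * gaussDensity k σ (x - u) := by
        apply setIntegral_mono_on
          ((hqInt.integrableOn).mul_const c) (hfInt.integrableOn) measurableSet_closedBall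
        intro u hu
        exact mul_le_mul_of_nonneg_left (hpoint u hu) (hq_nonneg u)
    _ ≤ ∫ u, q u * gaussDensity k σ (x - u) := by
        apply setIntegral_le_integral hfInt
        refine Filter.Eventually.of_forall fun u => ?_
        have hg0 : 0 ≤ gaussDensity k σ (x - u) := by unfold gaussDensity; positivity
        exact mul_nonneg (hq_nonneg u) hg0
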